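/- (Proposition 2, bad camp.) Fix any x¹, x² ∈ ℝⁿ and k_b > 0. The minimum of (y¹, y²) ↦ F(x¹, x², y¹, y²) over the feasible set {(y¹, y²) ∈ ℝⁿ × ℝⁿ : y¹_i ≥ 0 and y²_i ≥ 0 for all i, and Σ_i (y¹_i + y²_i) ≤ k_b} is attained, and it is attained at some point (y¹, y²) such that y¹ has at most one nonzero coordinate, y² has at most one nonzero coordinate, and either Σ_i (y¹_i + y²_i) = k_b or y¹ = y² = 0. -/

import Mathlib

/-- The two-phase objective function `F(x¹,x²,y¹,y²)` (the sum of final opinions). -/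
noncomputable def twoPhaseF (n : ℕ) (θ c r s : Fin n → ℝ)
    (b : Matrix (Fin n) (Fin n) ℝ) (x1 x2 y1 y2 : Fin n → ℝ) : ℝ :=
  (∑ i, ∑ j, c i * b j i)
  + (∑ j, x2 j * (θ j / 2) * ((∑ i, c i * b j i) + r j))
  + (∑ j, y2 j * (θ j / 2) * ((∑ i, c i * b j i) - r j))
  + (∑ i, x1 i * (θ i / 2) * (1 + c i) *
      (s i + ∑ j, (x2 j + y2 j) * (θ j / 2) * b j i))
  - (∑ i, y1 i * (θ i / 2) * (1 - c i) *
      (s i + ∑ j, (x2 j + y2 j) * (θ j / 2) * b j i))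

/-- Minimizing a linear functional over the scaled simplex
`{y : y ≥ 0, ∑ y ≤ B}`: the minimum is attained at `0` or at a vertex `B • e_i`. -/
lemma simplex_argmin {n : ℕ} (hn : 0 < n) (f : (Fin n → ℝ) → ℝ) (q : Fin n → ℝ)
    (hf : ∀ y, f y = f 0 + ∑ i, y i * q i) {B : ℝ} (hB : 0 ≤ B) :
    ∃ y : Fin n → ℝ, (∀ i, 0 ≤ y i) ∧ (∑ i, y i) ≤ B ∧
      (∀ i j, y i ≠ 0 → y j ≠ 0 → i = j) ∧
      (y = 0 ∨ (∑ i, y i) = B) ∧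
      (∀ z : Fin n → ℝ, (∀ i, 0 ≤ z i) → (∑ i, z i) ≤ B → f y ≤ f z) := by
  haveI : Nonempty (Fin n) := ⟨⟨0, hn⟩⟩
  obtain ⟨i0, hi0⟩ := Finite.exists_min q
  by_cases hq : 0 ≤ q i0
  · refine ⟨0, fun i => le_rfl, by simp [hB], by simp, Or.inl rfl, ?_⟩
    intro z hz hzs
    rw [hf z, hf 0]
    simp only [Pi.zero_apply, zero_mul, Finset.sum_const_zero, add_zero]
    have : (0:ℝ) ≤ ∑ i, z i * q i :=
      Finset.sum_nonneg fun i _ => mul_nonneg (hz i) (le_trans hq (hi0 i))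
    linarith
  · push_neg at hq
    have hkey : ∀ k, (Pi.single i0 B : Fin n → ℝ) k ≠ 0 → k = i0 := by
      intro k hk
      by_contra h
      exact hk (by simp [Pi.single_eq_of_ne h])
    have hsum : (∑ i, Pi.single i0 B i) = B := by
      simp [Finset.sum_pi_single']
    refine ⟨Pi.single i0 B, ?_, ?_, ?_, Or.inr hsum, ?_⟩
    · intro i
      rcases eq_or_ne i i0 with h | h
      · subst h; simp [hB]
      · simp [Pi.single_eq_of_ne h]
    · rw [hsum]
    · intro i j hi hj
      rw [hkey i hi, hkey j hj]
    · intro z hz hzs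
      rw [hf z, hf (Pi.single i0 B)]
      have h1 : (∑ i, (Pi.single i0 B : Fin n → ℝ) i * q i) = B * q i0 := by
        rw [Finset.sum_eq_single i0]
        · simp
        · intro i _ h; simp [Pi.single_eq_of_ne h]
        · simp
      have h2 : (∑ i, z i * q i0) ≤ ∑ i, z i * q i :=
        Finset.sum_le_sum fun i _ => mul_le_mul_of_nonneg_left (hi0 i) (hz i)
      have h3 : (∑ i, z i * q i0) = (∑ i, z i) * q i0 := (Finset.sum_mul _ _ _).symm
      have h4 : B * q i0 ≤ (∑ i, z i) * q i0 := mul_le_mul_of_nonpos_right hzs hq.le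
      rw [h1]
      linarith

/-- `F` is affine in the first phase-two vector `y1` (for fixed `y2`). -/
lemma twoPhaseF_aff1 (n : ℕ) (θ c r s : Fin n → ℝ) (b : Matrix (Fin n) (Fin n) ℝ)
    (x1 x2 y1 y2 : Fin n → ℝ) :
    twoPhaseF n θ c r s b x1 x2 y1 y2 =
      twoPhaseF n θ c r s b x1 x2 0 y2
      + ∑ i, y1 i *
          (-((θ i / 2) * (1 - c i) * (s i + ∑ j, (x2 j + y2 j) * (θ j / 2) * b j i))) := by
  unfold twoPhaseF
  simp only [Pi.zero_apply, zero_mul, Finset.sum_const_zero, sub_zero]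
  have h : (∑ i, y1 i *
        (-((θ i / 2) * (1 - c i) * (s i + ∑ j, (x2 j + y2 j) * (θ j / 2) * b j i))))
      = -∑ i, y1 i * (θ i / 2) * (1 - c i) *
          (s i + ∑ j, (x2 j + y2 j) * (θ j / 2) * b j i) := by
    rw [← Finset.sum_neg_distrib]
    exact Finset.sum_congr rfl fun i _ => by ring
  rw [h]
  ring

/-- `F` is affine in the second phase-two vector `y2` (for fixed `y1`). -/
lemma twoPhaseF_aff2 (n : ℕ) (θ c r s : Fin n → ℝ) (b : Matrix (Fin n) (Fin n) ℝ)
    (x1 x2 y1 y2 : Fin n → ℝ) :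
    twoPhaseF n θ c r s b x1 x2 y1 y2 =
      twoPhaseF n θ c r s b x1 x2 y1 0
      + ∑ j, y2 j *
          ((θ j / 2) * ((∑ i, c i * b j i) - r j)
            + (∑ i, x1 i * (θ i / 2) * (1 + c i) * ((θ j / 2) * b j i))
            - (∑ i, y1 i * (θ i / 2) * (1 - c i) * ((θ j / 2) * b j i))) := by
  have split : ∀ G : Fin n → ℝ,
      (∑ i, G i * (s i + ∑ j, (x2 j + y2 j) * (θ j / 2) * b j i))
        = (∑ i, G i * (s i + ∑ j, (x2 j + 0) * (θ j / 2) * b j i))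
          + ∑ j, y2 j * (∑ i, G i * ((θ j / 2) * b j i)) := by
    intro G
    have h1 : ∀ i : Fin n, G i * (s i + ∑ j, (x2 j + y2 j) * (θ j / 2) * b j i)
        = G i * (s i + ∑ j, (x2 j + 0) * (θ j / 2) * b j i)
          + ∑ j, G i * ((y2 j) * ((θ j / 2) * b j i)) := by
      intro i
      have h2 : (∑ j, (x2 j + y2 j) * (θ j / 2) * b j i)
          = (∑ j, (x2 j + 0) * (θ j / 2) * b j i)
            + ∑ j, y2 j * ((θ j / 2) * b j i) := by
        rw [← Finset.sum_add_distrib]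
        exact Finset.sum_congr rfl fun j _ => by ring
      rw [h2, ← add_assoc, mul_add, Finset.mul_sum]
    calc (∑ i, G i * (s i + ∑ j, (x2 j + y2 j) * (θ j / 2) * b j i))
        = ∑ i, (G i * (s i + ∑ j, (x2 j + 0) * (θ j / 2) * b j i)
            + ∑ j, G i * ((y2 j) * ((θ j / 2) * b j i))) :=
          Finset.sum_congr rfl fun i _ => h1 i
      _ = (∑ i, G i * (s i + ∑ j, (x2 j + 0) * (θ j / 2) * b j i))
            + ∑ i, ∑ j, G i * ((y2 j) * ((θ j / 2) * b j i)) := Finset.sum_add_distrib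
      _ = (∑ i, G i * (s i + ∑ j, (x2 j + 0) * (θ j / 2) * b j i))
            + ∑ j, ∑ i, G i * ((y2 j) * ((θ j / 2) * b j i)) := by rw [Finset.sum_comm]
      _ = (∑ i, G i * (s i + ∑ j, (x2 j + 0) * (θ j / 2) * b j i))
            + ∑ j, y2 j * (∑ i, G i * ((θ j / 2) * b j i)) := by
          congr 1
          refine Finset.sum_congr rfl fun j _ => ?_
          rw [Finset.mul_sum]
          exact Finset.sum_congr rfl fun i _ => by ring
  unfold twoPhaseF
  have h4 := split (fun i => x1 i * (θ i / 2) * (1 + c i))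
  have h5 := split (fun i => y1 i * (θ i / 2) * (1 - c i))
  rw [h4, h5]
  simp only [Pi.zero_apply, zero_mul, Finset.sum_const_zero, add_zero]
  have comb : (∑ j, y2 j *
          ((θ j / 2) * ((∑ i, c i * b j i) - r j)
            + (∑ i, x1 i * (θ i / 2) * (1 + c i) * ((θ j / 2) * b j i))
            - (∑ i, y1 i * (θ i / 2) * (1 - c i) * ((θ j / 2) * b j i))))
      = (∑ j, y2 j * (θ j / 2) * ((∑ i, c i * b j i) - r j))
        + (∑ j, y2 j * (∑ i, x1 i * (θ i / 2) * (1 + c i) * ((θ j / 2) * b j i)))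
        - (∑ j, y2 j * (∑ i, y1 i * (θ i / 2) * (1 - c i) * ((θ j / 2) * b j i))) := by
    rw [← Finset.sum_add_distrib, ← Finset.sum_sub_distrib]
    exact Finset.sum_congr rfl fun j _ => by ring
  rw [comb]
  ring

/-- Proposition 2, bad camp: for any fixed strategy `(x¹, x²)` of the
good camp, the minimum of `(y¹,y²) ↦ F(x¹,x²,y¹,y²)` over the bad camp's feasible set
is attained at a point where each phase's investment vector has at most one nonzero
coordinate, and either the entire budget is exhausted or nothing is invested. -/
theorem prop2_bad_camp (n : ℕ) (hn : 0 < n)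
    (W : Matrix (Fin n) (Fin n) ℝ)
    (hW : ∀ i, ∑ j, |W i j| < 1)
    (w0 θ z0 : Fin n → ℝ)
    (Δ : Matrix (Fin n) (Fin n) ℝ) (hΔ : Δ = (1 - W)⁻¹)
    (r : Fin n → ℝ) (hr : ∀ i, r i = ∑ j, Δ j i)
    (c : Fin n → ℝ) (hc : ∀ i, c i = w0 i * z0 i)
    (b : Matrix (Fin n) (Fin n) ℝ) (hb : ∀ j i, b j i = r j * w0 j * Δ j i)
    (s : Fin n → ℝ) (hs : ∀ i, s i = ∑ j, b j i)
    (x1 x2 : Fin n → ℝ)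
    (kb : ℝ) (hkb : 0 < kb) :
    ∃ y1 y2 : Fin n → ℝ,
      (∀ i, 0 ≤ y1 i) ∧ (∀ i, 0 ≤ y2 i) ∧ (∑ i, (y1 i + y2 i)) ≤ kb ∧
      (∀ y1' y2' : Fin n → ℝ,
        (∀ i, 0 ≤ y1' i) → (∀ i, 0 ≤ y2' i) → (∑ i, (y1' i + y2' i)) ≤ kb →
        twoPhaseF n θ c r s b x1 x2 y1 y2 ≤ twoPhaseF n θ c r s b x1 x2 y1' y2') ∧
      (∀ i j, y1 i ≠ 0 → y1 j ≠ 0 → i = j) ∧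
      (∀ i j, y2 i ≠ 0 → y2 j ≠ 0 → i = j) ∧
      ((∑ i, (y1 i + y2 i)) = kb ∨ (y1 = 0 ∧ y2 = 0)) := by
  classical
  -- Step 0: the feasible set is compact and `F` is continuous, so a minimizer exists.
  set K : Set ((Fin n → ℝ) × (Fin n → ℝ)) :=
    {p | (∀ i, 0 ≤ p.1 i) ∧ (∀ i, 0 ≤ p.2 i) ∧ (∑ i, (p.1 i + p.2 i)) ≤ kb} with hKdef
  have hK0 : ((0, 0) : (Fin n → ℝ) × (Fin n → ℝ)) ∈ K :=
    ⟨fun i => le_rfl, fun i => le_rfl, by simp [hkb.le]⟩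
  have hKclosed : IsClosed K := by
    have hEq : K = (⋂ i, {p : (Fin n → ℝ) × (Fin n → ℝ) | 0 ≤ p.1 i})
        ∩ ((⋂ i, {p : (Fin n → ℝ) × (Fin n → ℝ) | 0 ≤ p.2 i})
          ∩ {p : (Fin n → ℝ) × (Fin n → ℝ) | (∑ i, (p.1 i + p.2 i)) ≤ kb}) := by
      ext p
      simp only [hKdef, Set.mem_setOf_eq, Set.mem_inter_iff, Set.mem_iInter]
    rw [hEq]
    apply IsClosed.inter
    · exact isClosed_iInter fun i => isClosed_le continuous_const (by fun_prop)
    apply IsClosed.inter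
    · exact isClosed_iInter fun i => isClosed_le continuous_const (by fun_prop)
    · exact isClosed_le (by fun_prop) continuous_const
  have hKbdd : Bornology.IsBounded K := by
    refine (Metric.isBounded_closedBall
      (x := (0 : (Fin n → ℝ) × (Fin n → ℝ))) (r := kb)).subset ?_
    rintro p ⟨h1, h2, h3⟩
    rw [Metric.mem_closedBall, dist_zero_right]
    have hterm : ∀ (f g : Fin n → ℝ), (∀ i, 0 ≤ f i) → (∀ i, 0 ≤ g i) →
        (∑ i, (f i + g i)) ≤ kb → ∀ i, |f i| ≤ kb := by
      intro f g hf hg hsle i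
      have h4 : f i + g i ≤ ∑ j, (f j + g j) :=
        Finset.single_le_sum (f := fun j => f j + g j)
          (fun j _ => add_nonneg (hf j) (hg j)) (Finset.mem_univ i)
      rw [abs_le]
      constructor <;> [linarith [hf i]; linarith [hg i]]
    rw [Prod.norm_def]
    refine max_le ?_ ?_
    · rw [pi_norm_le_iff_of_nonneg hkb.le]
      intro i; rw [Real.norm_eq_abs]; exact hterm p.1 p.2 h1 h2 h3 i
    · rw [pi_norm_le_iff_of_nonneg hkb.le]
      intro i; rw [Real.norm_eq_abs]
      have h3' : (∑ j, (p.2 j + p.1 j)) ≤ kb := by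
        rw [show (∑ j, (p.2 j + p.1 j)) = ∑ j, (p.1 j + p.2 j) from
          Finset.sum_congr rfl fun j _ => by ring]
        exact h3
      exact hterm p.2 p.1 h2 h1 h3' i
  have hKcomp : IsCompact K := Metric.isCompact_of_isClosed_isBounded hKclosed hKbdd
  have hcont : Continuous fun p : (Fin n → ℝ) × (Fin n → ℝ) =>
      twoPhaseF n θ c r s b x1 x2 p.1 p.2 := by
    unfold twoPhaseF
    fun_prop
  obtain ⟨⟨a1, a2⟩, haK, hamin⟩ := hKcomp.exists_isMinOn ⟨_, hK0⟩ hcont.continuousOn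
  obtain ⟨ha1, ha2, hasum⟩ := haK
  have hmin : ∀ z1 z2 : Fin n → ℝ, (∀ i, 0 ≤ z1 i) → (∀ i, 0 ≤ z2 i) →
      (∑ i, (z1 i + z2 i)) ≤ kb →
      twoPhaseF n θ c r s b x1 x2 a1 a2 ≤ twoPhaseF n θ c r s b x1 x2 z1 z2 :=
    fun z1 z2 h1 h2 h3 => isMinOn_iff.mp hamin (z1, z2) ⟨h1, h2, h3⟩
  have hsum_split : ∀ f g : Fin n → ℝ,
      (∑ i, (f i + g i)) = (∑ i, f i) + (∑ i, g i) := fun f g => Finset.sum_add_distrib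
  have ha1nn : (0:ℝ) ≤ ∑ i, a1 i := Finset.sum_nonneg fun i _ => ha1 i
  have ha2nn : (0:ℝ) ≤ ∑ i, a2 i := Finset.sum_nonneg fun i _ => ha2 i
  have hasum' : (∑ i, a1 i) + (∑ i, a2 i) ≤ kb := by rw [← hsum_split]; exact hasum
  -- Step A: replace `a1` by a single-vertex vector `u` over budget `kb - ∑ a2`.
  obtain ⟨u, hu0, husum, huone, hucase, humin⟩ :=
    simplex_argmin hn (fun y => twoPhaseF n θ c r s b x1 x2 y a2)
      (fun i => -((θ i / 2) * (1 - c i) * (s i + ∑ j, (x2 j + a2 j) * (θ j / 2) * b j i)))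
      (fun y => twoPhaseF_aff1 n θ c r s b x1 x2 y a2)
      (B := kb - ∑ i, a2 i) (by linarith)
  have huA : twoPhaseF n θ c r s b x1 x2 u a2 ≤ twoPhaseF n θ c r s b x1 x2 a1 a2 :=
    humin a1 ha1 (by linarith)
  have husumnn : (0:ℝ) ≤ ∑ i, u i := Finset.sum_nonneg fun i _ => hu0 i
  -- Step B: replace `a2` by a single-vertex vector `v` over budget `kb - ∑ u`.
  obtain ⟨v, hv0, hvsum, hvone, hvcase, hvmin⟩ :=
    simplex_argmin hn (fun y => twoPhaseF n θ c r s b x1 x2 u y)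
      (fun j => (θ j / 2) * ((∑ i, c i * b j i) - r j)
        + (∑ i, x1 i * (θ i / 2) * (1 + c i) * ((θ j / 2) * b j i))
        - (∑ i, u i * (θ i / 2) * (1 - c i) * ((θ j / 2) * b j i)))
      (fun y => twoPhaseF_aff2 n θ c r s b x1 x2 u y)
      (B := kb - ∑ i, u i) (by linarith)
  have hvB : twoPhaseF n θ c r s b x1 x2 u v ≤ twoPhaseF n θ c r s b x1 x2 u a2 :=
    hvmin a2 ha2 (by linarith)
  have hglob : ∀ z1 z2 : Fin n → ℝ, (∀ i, 0 ≤ z1 i) → (∀ i, 0 ≤ z2 i) →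
      (∑ i, (z1 i + z2 i)) ≤ kb →
      twoPhaseF n θ c r s b x1 x2 u v ≤ twoPhaseF n θ c r s b x1 x2 z1 z2 :=
    fun z1 z2 h1 h2 h3 => le_trans (le_trans hvB huA) (hmin z1 z2 h1 h2 h3)
  rcases hvcase with hveq | hvfull
  · -- Case `v = 0`: re-optimize the first vector over the whole budget `kb`.
    obtain ⟨w, hw0, hwsum, hwone, hwcase, hwmin⟩ :=
      simplex_argmin hn (fun y => twoPhaseF n θ c r s b x1 x2 y 0)
        (fun i => -((θ i / 2) * (1 - c i) *
          (s i + ∑ j, (x2 j + (0 : Fin n → ℝ) j) * (θ j / 2) * b j i)))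
        (fun y => twoPhaseF_aff1 n θ c r s b x1 x2 y 0)
        (B := kb) hkb.le
    have hwu : twoPhaseF n θ c r s b x1 x2 w 0 ≤ twoPhaseF n θ c r s b x1 x2 u 0 :=
      hwmin u hu0 (by linarith)
    have huv0 : twoPhaseF n θ c r s b x1 x2 u 0 = twoPhaseF n θ c r s b x1 x2 u v := by
      rw [hveq]
    refine ⟨w, 0, hw0, fun i => le_rfl, ?_, ?_, hwone, fun i j hi _ => absurd rfl hi, ?_⟩
    · simpa using hwsum
    · intro z1 z2 h1 h2 h3
      calc twoPhaseF n θ c r s b x1 x2 w 0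
          ≤ twoPhaseF n θ c r s b x1 x2 u 0 := hwu
        _ = twoPhaseF n θ c r s b x1 x2 u v := huv0
        _ ≤ twoPhaseF n θ c r s b x1 x2 z1 z2 := hglob z1 z2 h1 h2 h3
    · rcases hwcase with hw | hw
      · exact Or.inr ⟨hw, rfl⟩
      · exact Or.inl (by simpa using hw)
  · -- Case `∑ v = kb - ∑ u`: the whole budget is exhausted by `(u, v)`.
    refine ⟨u, v, hu0, hv0, ?_, hglob, huone, hvone, Or.inl ?_⟩
    · rw [hsum_split]; linarith
    · rw [hsum_split]; linarith
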